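/- For fixed η ∈ (0,1], ψ > 0, and q ∈ (0,1], the limit as U → ∞ of (U-1)·(1-η)·q·(ψ/U)·P_f^C(U), where P_f^C(U) = Σ_{k=0}^{U-2} (1/(k+1))·C(U-2,k)·(ηψ/U)^k·(1-ηψ/U)^(U-2-k), equals ((1-η)/η)·q·(1 - exp(-ηψ)). -/

import Mathlib

open Real Filter

lemma key_sum (n : ℕ) (x : ℝ) (hx : x ≠ 0) :
    ∑ k ∈ Finset.range (n+1), (1/((k:ℝ)+1)) * (n.choose k : ℝ) * x^k * (1-x)^(n-k)
    = (1 - (1-x)^(n+1)) / (((n:ℝ)+1) * x) := by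
  rw [eq_div_iff (mul_ne_zero (by positivity) hx), Finset.sum_mul]
  have h1 : ∀ k ∈ Finset.range (n+1),
      (1/((k:ℝ)+1)) * (n.choose k : ℝ) * x^k * (1-x)^(n-k) * (((n:ℝ)+1) * x)
      = ((n+1).choose (k+1) : ℝ) * x^(k+1) * (1-x)^(n-k) := by
    intro k hk
    have hc : ((n+1:ℕ):ℝ) * (n.choose k : ℝ) = ((n+1).choose (k+1) : ℝ) * ((k:ℝ)+1) := by
      have := Nat.add_one_mul_choose_eq n k
      have := congrArg (Nat.cast (R := ℝ)) this
      push_cast at this ⊢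
      linarith
    have hk1 : ((k:ℝ)+1) ≠ 0 := by positivity
    field_simp
    push_cast at hc ⊢
    linear_combination (x^(k+1)*(1-x)^(n-k)) * hc
  rw [Finset.sum_congr rfl h1]
  have hb := add_pow x (1-x) (n+1)
  have hx1 : x + (1-x) = 1 := by ring
  rw [hx1, one_pow] at hb
  rw [Finset.sum_range_succ'] at hb
  have : ∀ k ∈ Finset.range (n+1),
      x^(k+1) * (1-x)^(n+1-(k+1)) * ((n+1).choose (k+1) : ℝ)
      = ((n+1).choose (k+1) : ℝ) * x^(k+1) * (1-x)^(n-k) := by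
    intro k hk
    have : n + 1 - (k+1) = n - k := by omega
    rw [this]; ring
  rw [Finset.sum_congr rfl this] at hb
  simp only [pow_zero, Nat.sub_zero, Nat.choose_zero_right, Nat.cast_one, one_mul, mul_one] at hb
  linarith

lemma pow_lim (c : ℝ) :
    Tendsto (fun U : ℕ => (1 - c/U)^(U-1)) atTop (nhds (Real.exp (-c))) := by
  have h1 : Tendsto (fun U : ℕ => (1 + (-c)/U)^U) atTop (nhds (Real.exp (-c))) :=
    Real.tendsto_one_add_div_pow_exp (-c)
  have h2 : Tendsto (fun U : ℕ => 1 + (-c)/U) atTop (nhds 1) := by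
    have := tendsto_const_div_atTop_nhds_zero_nat (-c)
    have := this.const_add 1
    simpa using this
  have h3 : Tendsto (fun U : ℕ => (1 + (-c)/U)^U / (1 + (-c)/U)) atTop
      (nhds (Real.exp (-c))) := by
    simpa [Pi.div_def] using h1.div h2 one_ne_zero
  apply h3.congr'
  filter_upwards [eventually_gt_atTop (max 1 ⌈|c|⌉₊)] with U hU
  have hU1 : 1 ≤ U := le_of_lt (lt_of_le_of_lt (le_max_left _ _) hU)
  have hcU : |c| < U := by
    calc |c| ≤ ⌈|c|⌉₊ := Nat.le_ceil _
    _ < U := by exact_mod_cast lt_of_le_of_lt (le_max_right _ _) hU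
  have hb : (1:ℝ) + (-c)/U ≠ 0 := by
    have hU0 : (0:ℝ) < U := by positivity
    have h4 : c/U < 1 := by
      rw [div_lt_one hU0]; exact lt_of_le_of_lt (le_abs_self c) hcU
    have h5 : (-c)/U = -(c/U) := by ring
    have : (0:ℝ) < 1 + (-c)/U := by rw [h5]; linarith
    exact ne_of_gt this
  have : (1:ℝ) + (-c)/U = 1 - c/U := by ring
  rw [← this, pow_sub₀ _ hb hU1, pow_one, div_eq_mul_inv]

theorem statement4 (η ψ q : ℝ) (hη : 0 < η) (hη1 : η ≤ 1) (hψ : 0 < ψ)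
    (hq : 0 < q) (hq1 : q ≤ 1) :
    Tendsto (fun U : ℕ =>
        ((U : ℝ) - 1) * (1 - η) * q * (ψ / U) *
          ∑ k ∈ Finset.range (U - 1),
            (1 / ((k : ℝ) + 1)) * ((U - 2).choose k : ℝ) *
              (η * ψ / U) ^ k * (1 - η * ψ / U) ^ (U - 2 - k))
      atTop (nhds ((1 - η) / η * q * (1 - Real.exp (-(η * ψ))))) := by
  have hlim : Tendsto (fun U : ℕ => (1-η)/η * q * (1 - (1 - η*ψ/U)^(U-1))) atTop
      (nhds ((1 - η) / η * q * (1 - Real.exp (-(η * ψ))))) := by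
    have := (pow_lim (η*ψ)).const_sub 1
    exact (this.const_mul ((1-η)/η * q))
  apply hlim.congr'
  filter_upwards [eventually_ge_atTop 2] with U hU
  have hU0 : (0:ℝ) < U := by positivity
  have hx : η*ψ/U ≠ 0 := by positivity
  have hn : U - 1 = (U - 2) + 1 := by omega
  have hcast : ((U-2:ℕ):ℝ) + 1 = (U:ℝ) - 1 := by
    have : ((U-2:ℕ):ℝ) = (U:ℝ) - 2 := by
      push_cast [Nat.cast_sub hU]; ring
    rw [this]; ring
  rw [hn]
  rw [key_sum (U-2) (η*ψ/U) hx, hcast, ← hn]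
  have hU1 : (U:ℝ) - 1 ≠ 0 := by
    have : (2:ℝ) ≤ U := by exact_mod_cast hU
    linarith
  field_simp
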